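/- Let (F, d) be a compact metric space and L : F × F → ℝ a symmetric function that is Hölder continuous with exponent α ∈ (0,1] and constant c (in each variable: |L(x',y) − L(x,y)| ≤ c·d(x,x')^α). Then for any p ∈ [1,∞) and any Borel probability measures ρ, ρ̃ on F, the action S satisfies |S(ρ̃) − S(ρ)| ≤ 2c · W_p(ρ̃, ρ)^α. -/

import Mathlib

open MeasureTheory

/-- A Hölder-type bound implies continuity. -/
lemma holderBound_continuous {X : Type*} [MetricSpace X] {f : X → ℝ} {c α : ℝ} (hα : 0 < α)
    (h : ∀ a b, |f b - f a| ≤ c * dist a b ^ α) : Continuous f := by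
  rw [Metric.continuous_iff]
  intro b ε hε
  have hden : (0:ℝ) < |c| + 1 := by positivity
  refine ⟨min 1 ((ε / (|c| + 1)) ^ α⁻¹), lt_min one_pos (Real.rpow_pos_of_pos (by positivity) _),
    fun a ha => ?_⟩
  have h1 : dist (f a) (f b) ≤ |c| * dist a b ^ α := by
    rw [Real.dist_eq]
    calc |f a - f b| ≤ c * dist b a ^ α := h b a
      _ ≤ |c| * dist a b ^ α := by
          rw [dist_comm b a]
          exact mul_le_mul_of_nonneg_right (le_abs_self c)
            (Real.rpow_nonneg dist_nonneg α)
  have h2 : dist a b ^ α ≤ ε / (|c| + 1) := by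
    calc dist a b ^ α ≤ ((ε / (|c| + 1)) ^ α⁻¹) ^ α :=
          Real.rpow_le_rpow dist_nonneg (ha.le.trans (min_le_right _ _)) hα.le
      _ = ε / (|c| + 1) := Real.rpow_inv_rpow (by positivity) hα.ne'
  have h3 : |c| * (ε / (|c| + 1)) < ε := by
    rw [mul_div_assoc', div_lt_iff₀ hden]
    nlinarith [abs_nonneg c]
  calc dist (f a) (f b) ≤ |c| * (ε / (|c| + 1)) :=
        h1.trans (mul_le_mul_of_nonneg_left h2 (abs_nonneg c))
    _ < ε := h3

/-- Continuous functions on a compact space are integrable w.r.t. finite measures. -/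
lemma cont_integrable {X : Type*} [MeasurableSpace X] [TopologicalSpace X]
    [OpensMeasurableSpace X] [T2Space X] [CompactSpace X] {f : X → ℝ} (hf : Continuous f)
    (μ : Measure X) [IsFiniteMeasure μ] : Integrable f μ :=
  integrableOn_univ.mp (hf.continuousOn.integrableOn_compact isCompact_univ)

lemma coupling_isProb {X : Type*} [MeasurableSpace X] {P : Measure (X × X)} {μ : Measure X}
    [IsProbabilityMeasure μ] (h1 : P.map Prod.fst = μ) : IsProbabilityMeasure P := by
  constructor
  have h := congrArg (fun m : Measure X => m Set.univ) h1
  simpa [Measure.map_apply measurable_fst MeasurableSet.univ] using h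

lemma jensen_rpow {X : Type*} [MeasurableSpace X] (P : Measure X) [IsProbabilityMeasure P]
    {u : X → ℝ} (hu : ∀ x, 0 ≤ u x) {r : ℝ} (hr0 : 0 < r) (hr1 : r ≤ 1)
    (hui : Integrable u P) (hui2 : Integrable (fun x => u x ^ r) P) :
    ∫ x, u x ^ r ∂P ≤ (∫ x, u x ∂P) ^ r := by
  have hg : ConcaveOn ℝ (Set.Ici 0) fun t : ℝ => t ^ r := Real.concaveOn_rpow hr0.le hr1
  have hgc : ContinuousOn (fun t : ℝ => t ^ r) (Set.Ici 0) :=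
    (continuous_iff_continuousAt.mpr fun t =>
      Real.continuousAt_rpow_const t r (Or.inr hr0.le)).continuousOn
  exact hg.le_map_integral hgc isClosed_Ici
    (Filter.Eventually.of_forall fun x => hu x) hui hui2

lemma holder_transfer {F : Type*} [MetricSpace F] [CompactSpace F] [MeasurableSpace F]
    [BorelSpace F] {f : F → ℝ} {c α : ℝ} (hα : 0 < α)
    (hf : ∀ a b, |f b - f a| ≤ c * dist a b ^ α)
    (P : Measure (F × F)) [IsProbabilityMeasure P] {μ ν : Measure F}
    (h1 : P.map Prod.fst = μ) (h2 : P.map Prod.snd = ν) :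
    |∫ x, f x ∂μ - ∫ x, f x ∂ν| ≤ c * ∫ q, dist q.1 q.2 ^ α ∂P := by
  have hfc := holderBound_continuous hα hf
  have hint1 : Integrable (fun q : F × F => f q.1) P :=
    cont_integrable (hfc.comp continuous_fst) P
  have hint2 : Integrable (fun q : F × F => f q.2) P :=
    cont_integrable (hfc.comp continuous_snd) P
  have hdc : Continuous fun q : F × F => c * dist q.1 q.2 ^ α :=
    continuous_const.mul ((continuous_fst.dist continuous_snd).rpow_const fun q => Or.inr hα.le)
  have e1 : ∫ x, f x ∂μ = ∫ q : F × F, f q.1 ∂P := by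
    rw [← h1, integral_map measurable_fst.aemeasurable hfc.aestronglyMeasurable]
  have e2 : ∫ x, f x ∂ν = ∫ q : F × F, f q.2 ∂P := by
    rw [← h2, integral_map measurable_snd.aemeasurable hfc.aestronglyMeasurable]
  calc |∫ x, f x ∂μ - ∫ x, f x ∂ν| = |∫ q : F × F, (f q.1 - f q.2) ∂P| := by
        rw [e1, e2, integral_sub hint1 hint2]
    _ ≤ ∫ q : F × F, |f q.1 - f q.2| ∂P := by
        simpa [Real.norm_eq_abs] using
          norm_integral_le_integral_norm (μ := P) fun q : F × F => f q.1 - f q.2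
    _ ≤ ∫ q : F × F, c * dist q.1 q.2 ^ α ∂P := by
        refine integral_mono (hint1.sub hint2).abs (cont_integrable hdc P) fun q => ?_
        have := hf q.2 q.1
        rwa [dist_comm] at this
    _ = c * ∫ q : F × F, dist q.1 q.2 ^ α ∂P := integral_const_mul c _

/-- The `p`-Wasserstein distance, defined via couplings. -/
noncomputable def wassersteinDist {F : Type*} [MetricSpace F] [MeasurableSpace F]
    (p : ℝ) (μ ν : Measure F) : ℝ :=
  (⨅ P : {P : Measure (F × F) // P.map Prod.fst = μ ∧ P.map Prod.snd = ν},
      ∫ q, dist q.1 q.2 ^ p ∂(P.1)) ^ (1 / p)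

theorem action_holder_wasserstein {F : Type*} [MetricSpace F] [CompactSpace F]
    [MeasurableSpace F] [BorelSpace F]
    (L : F → F → ℝ) (hLsymm : ∀ x y, L x y = L y x)
    (α : ℝ) (hα0 : 0 < α) (hα1 : α ≤ 1) (c : ℝ)
    (hHolder : ∀ x x' y, |L x' y - L x y| ≤ c * dist x x' ^ α)
    (p : ℝ) (hp : 1 ≤ p)
    (ρ ρ' : Measure F) [IsProbabilityMeasure ρ] [IsProbabilityMeasure ρ'] :
    |(∫ x, ∫ y, L x y ∂ρ' ∂ρ') - ∫ x, ∫ y, L x y ∂ρ ∂ρ| ≤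
      2 * c * wassersteinDist p ρ' ρ ^ α := by
  have hp0 : 0 < p := lt_of_lt_of_le one_pos hp
  haveI hNE : Nonempty {P : Measure (F × F) // P.map Prod.fst = ρ' ∧ P.map Prod.snd = ρ} :=
    ⟨⟨ρ'.prod ρ, by constructor <;> simp [measure_univ]⟩⟩
  rcases subsingleton_or_nontrivial F with hF | hF
  · -- Subsingleton case: both sides are zero.
    have hρ : ρ = ρ' := by
      ext s hs
      rcases s.eq_empty_or_nonempty with rfl | ⟨x, hx⟩
      · simp
      · have hsu : s = Set.univ := Set.eq_univ_of_forall fun y => (Subsingleton.elim y x) ▸ hx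
        rw [hsu]; simp
    subst hρ
    have hW : wassersteinDist p ρ ρ = 0 := by
      unfold wassersteinDist
      have h0 : ∀ P : {P : Measure (F × F) // P.map Prod.fst = ρ ∧ P.map Prod.snd = ρ},
          ∫ q, dist q.1 q.2 ^ p ∂(P.1) = 0 := by
        intro P
        have hq : ∀ q : F × F, dist q.1 q.2 ^ p = (0:ℝ) := fun q => by
          rw [Subsingleton.elim q.1 q.2, dist_self, Real.zero_rpow hp0.ne']
        simp only [hq, integral_zero]
      rw [iInf_congr h0, ciInf_const, Real.zero_rpow (by positivity)]
    rw [hW, sub_self, abs_zero, Real.zero_rpow hα0.ne', mul_zero]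
  · -- Nontrivial case.
    obtain ⟨x₀, x₁, hx01⟩ := exists_pair_ne F
    have hc : 0 ≤ c := by
      by_contra hcneg
      push_neg at hcneg
      have hd : 0 < dist x₀ x₁ ^ α := Real.rpow_pos_of_pos (dist_pos.mpr hx01) α
      have := (abs_nonneg (L x₁ x₀ - L x₀ x₀)).trans (hHolder x₀ x₁ x₀)
      nlinarith
    have hL2 : ∀ x a b, |L x b - L x a| ≤ c * dist a b ^ α := fun x a b => by
      rw [hLsymm x b, hLsymm x a]; exact hHolder a b x
    have hLpair : ∀ q q' : F × F, |L q'.1 q'.2 - L q.1 q.2| ≤ 2 * c * dist q q' ^ α := by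
      intro q q'
      have h1 := hHolder q.1 q'.1 q.2
      have h2 := hL2 q'.1 q.2 q'.2
      have hd1 : dist q.1 q'.1 ^ α ≤ dist q q' ^ α :=
        Real.rpow_le_rpow dist_nonneg (by rw [Prod.dist_eq]; exact le_max_left _ _) hα0.le
      have hd2 : dist q.2 q'.2 ^ α ≤ dist q q' ^ α :=
        Real.rpow_le_rpow dist_nonneg (by rw [Prod.dist_eq]; exact le_max_right _ _) hα0.le
      calc |L q'.1 q'.2 - L q.1 q.2|
          ≤ |L q'.1 q'.2 - L q'.1 q.2| + |L q'.1 q.2 - L q.1 q.2| := abs_sub_le _ _ _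
        _ ≤ c * dist q q' ^ α + c * dist q q' ^ α :=
            add_le_add (h2.trans (mul_le_mul_of_nonneg_left hd2 hc))
              (h1.trans (mul_le_mul_of_nonneg_left hd1 hc))
        _ = 2 * c * dist q q' ^ α := by ring
    have hLc : Continuous fun q : F × F => L q.1 q.2 := holderBound_continuous hα0 hLpair
    set g : F → ℝ := fun x => ∫ y, L x y ∂ρ' with hgdef
    set h : F → ℝ := fun y => ∫ x, L x y ∂ρ with hhdef
    have hcont1 : ∀ x : F, Continuous fun y => L x y := fun x =>
      hLc.comp (Continuous.prodMk_right x)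
    have hcont2 : ∀ y : F, Continuous fun x => L x y := fun y =>
      hLc.comp (Continuous.prodMk continuous_id continuous_const)
    have hgH : ∀ a b, |g b - g a| ≤ c * dist a b ^ α := by
      intro a b
      have hia : Integrable (fun y => L a y) ρ' := cont_integrable (hcont1 a) ρ'
      have hib : Integrable (fun y => L b y) ρ' := cont_integrable (hcont1 b) ρ'
      have hsub : g b - g a = ∫ y, (L b y - L a y) ∂ρ' := (integral_sub hib hia).symm
      rw [hsub]
      calc |∫ y, (L b y - L a y) ∂ρ'| ≤ ∫ y, |L b y - L a y| ∂ρ' := by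
            simpa [Real.norm_eq_abs] using
              norm_integral_le_integral_norm (μ := ρ') fun y => L b y - L a y
        _ ≤ ∫ _y, c * dist a b ^ α ∂ρ' :=
            integral_mono (hib.sub hia).abs (integrable_const _) fun y => hHolder a b y
        _ = c * dist a b ^ α := by simp
    have hhH : ∀ a b, |h b - h a| ≤ c * dist a b ^ α := by
      intro a b
      have hia : Integrable (fun x => L x a) ρ := cont_integrable (hcont2 a) ρ
      have hib : Integrable (fun x => L x b) ρ := cont_integrable (hcont2 b) ρ
      have hsub : h b - h a = ∫ x, (L x b - L x a) ∂ρ := (integral_sub hib hia).symm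
      rw [hsub]
      calc |∫ x, (L x b - L x a) ∂ρ| ≤ ∫ x, |L x b - L x a| ∂ρ := by
            simpa [Real.norm_eq_abs] using
              norm_integral_le_integral_norm (μ := ρ) fun x => L x b - L x a
        _ ≤ ∫ _x, c * dist a b ^ α ∂ρ :=
            integral_mono (hib.sub hia).abs (integrable_const _) fun x => hL2 x a b
        _ = c * dist a b ^ α := by simp
    have hFub : ∫ x, g x ∂ρ = ∫ y, h y ∂ρ' := by
      rw [hgdef, hhdef]
      exact integral_integral_swap (cont_integrable hLc (ρ.prod ρ'))
    have hA : ∫ x, ∫ y, L x y ∂ρ' ∂ρ' = ∫ x, g x ∂ρ' := rfl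
    have hB : ∫ x, ∫ y, L x y ∂ρ ∂ρ = ∫ y, h y ∂ρ := by
      rw [hhdef]
      refine integral_congr_ae (Filter.Eventually.of_forall fun t => ?_)
      exact integral_congr_ae (Filter.Eventually.of_forall fun x => hLsymm t x)
    set r := α / p with hrdef
    have hr0 : 0 < r := div_pos hα0 hp0
    have hr1 : r ≤ 1 := by rw [div_le_one hp0]; linarith
    have hpr : p * r = α := by rw [hrdef]; field_simp [hp0.ne']
    unfold wassersteinDist
    set I : {P : Measure (F × F) // P.map Prod.fst = ρ' ∧ P.map Prod.snd = ρ} → ℝ :=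
      fun P => ∫ q, dist q.1 q.2 ^ p ∂(P.1) with hIdef
    have hInonneg : ∀ P, 0 ≤ I P := fun P =>
      integral_nonneg fun q => Real.rpow_nonneg dist_nonneg p
    have hbdd : BddBelow (Set.range I) := ⟨0, by rintro _ ⟨P, rfl⟩; exact hInonneg P⟩
    have hInf0 : 0 ≤ ⨅ P, I P := le_ciInf hInonneg
    set φ : ℝ → ℝ := fun t => 2 * c * (max t 0) ^ r with hφdef
    have hφmono : Monotone φ := fun s t hst =>
      mul_le_mul_of_nonneg_left
        (Real.rpow_le_rpow (le_max_right s 0) (max_le_max hst le_rfl) hr0.le) (by positivity)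
    have hφcont : Continuous φ :=
      continuous_const.mul ((continuous_id.max continuous_const).rpow_const fun t =>
        Or.inr hr0.le)
    have key : ∀ P, |(∫ x, ∫ y, L x y ∂ρ' ∂ρ') - ∫ x, ∫ y, L x y ∂ρ ∂ρ| ≤ φ (I P) := by
      rintro ⟨P, hP1, hP2⟩
      haveI : IsProbabilityMeasure P := coupling_isProb hP1
      have t1 := holder_transfer hα0 hgH P hP1 hP2
      have t2 := holder_transfer hα0 hhH P hP1 hP2
      set Jα := ∫ q, dist q.1 q.2 ^ α ∂P with hJα
      have hJensen : Jα ≤ (∫ q, dist q.1 q.2 ^ p ∂P) ^ r := by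
        have hpt : ∀ q : F × F, (dist q.1 q.2 ^ p) ^ r = dist q.1 q.2 ^ α := fun q => by
          rw [← Real.rpow_mul dist_nonneg, hpr]
        have huint : Integrable (fun q : F × F => dist q.1 q.2 ^ p) P :=
          cont_integrable ((continuous_fst.dist continuous_snd).rpow_const fun q =>
            Or.inr hp0.le) P
        have huint2 : Integrable (fun q : F × F => (dist q.1 q.2 ^ p) ^ r) P := by
          simp only [hpt]
          exact cont_integrable ((continuous_fst.dist continuous_snd).rpow_const fun q =>
            Or.inr hα0.le) P
        have hj := jensen_rpow P (fun q : F × F => Real.rpow_nonneg dist_nonneg p)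
          hr0 hr1 huint huint2
        simpa only [hpt] using hj
      have hdecomp : (∫ x, ∫ y, L x y ∂ρ' ∂ρ') - ∫ x, ∫ y, L x y ∂ρ ∂ρ =
          ((∫ x, g x ∂ρ') - ∫ x, g x ∂ρ) + ((∫ y, h y ∂ρ') - ∫ y, h y ∂ρ) := by
        rw [hA, hB]; linarith [hFub]
      have habs : |(∫ x, ∫ y, L x y ∂ρ' ∂ρ') - ∫ x, ∫ y, L x y ∂ρ ∂ρ| ≤ 2 * c * Jα := by
        rw [hdecomp]
        calc |((∫ x, g x ∂ρ') - ∫ x, g x ∂ρ) + ((∫ y, h y ∂ρ') - ∫ y, h y ∂ρ)|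
            ≤ |(∫ x, g x ∂ρ') - ∫ x, g x ∂ρ| + |(∫ y, h y ∂ρ') - ∫ y, h y ∂ρ| := abs_add_le _ _
          _ ≤ c * Jα + c * Jα := add_le_add t1 t2
          _ = 2 * c * Jα := by ring
      refine habs.trans ?_
      have hI' : I ⟨P, hP1, hP2⟩ = ∫ q, dist q.1 q.2 ^ p ∂P := rfl
      have hmax : max (I ⟨P, hP1, hP2⟩) 0 = ∫ q, dist q.1 q.2 ^ p ∂P := by
        rw [max_eq_left (hInonneg _), hI']
      calc 2 * c * Jα ≤ 2 * c * (∫ q, dist q.1 q.2 ^ p ∂P) ^ r :=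
            mul_le_mul_of_nonneg_left hJensen (by positivity)
        _ = φ (I ⟨P, hP1, hP2⟩) := by rw [hφdef]; simp only [hmax]
    have h1 : |(∫ x, ∫ y, L x y ∂ρ' ∂ρ') - ∫ x, ∫ y, L x y ∂ρ ∂ρ| ≤ ⨅ P, φ (I P) :=
      le_ciInf key
    have h2 : φ (⨅ P, I P) = ⨅ P, φ (I P) :=
      hφmono.map_ciInf_of_continuousAt hφcont.continuousAt hbdd
    have h3 : ((⨅ P, I P) ^ (1 / p)) ^ α = (⨅ P, I P) ^ r := by
      rw [← Real.rpow_mul hInf0, hrdef, one_div, inv_mul_eq_div]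
    calc |(∫ x, ∫ y, L x y ∂ρ' ∂ρ') - ∫ x, ∫ y, L x y ∂ρ ∂ρ|
        ≤ ⨅ P, φ (I P) := h1
      _ = φ (⨅ P, I P) := h2.symm
      _ = 2 * c * ((⨅ P, I P) ^ (1 / p)) ^ α := by
          rw [hφdef]; simp only [max_eq_left hInf0, h3]
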